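/- Let N ≥ 1 and let q : {0,...,N+1} → ℝ be a probability mass function with all values strictly positive. Define q' : {0,...,N} → ℝ by q'(a) = (C(N,a)/C(N+1,a))·q(a) + (C(N,a)/C(N+1,a+1))·q(a+1). Then q' is a probability mass function on {0,...,N}, i.e., q'(a) ≥ 0 for all a and ∑_{a=0}^{N} q'(a) = 1. -/

import Mathlib

/-- The standard reduction of the pmf of the sum of `N+1` exchangeable events
to the pmf of the sum of the first `N` events yields a probability mass
function. -/
theorem stmt_1 (N : ℕ) (hN : 1 ≤ N) (q q' : ℕ → ℝ)
    (hpos : ∀ a ≤ N + 1, 0 < q a)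
    (hsum : ∑ a ∈ Finset.range (N + 2), q a = 1)
    (hq' : ∀ a ≤ N, q' a =
        ((N.choose a : ℝ) / ((N + 1).choose a : ℝ)) * q a +
          ((N.choose a : ℝ) / ((N + 1).choose (a + 1) : ℝ)) * q (a + 1)) :
    (∀ a ≤ N, 0 ≤ q' a) ∧ ∑ a ∈ Finset.range (N + 1), q' a = 1 := by
  constructor
  · intro a ha
    rw [hq' a ha]
    have h1 := (hpos a (by omega)).le
    have h2 := (hpos (a + 1) (by omega)).le
    positivity
  · have key : ∑ a ∈ Finset.range (N + 1), q' a
        = ∑ a ∈ Finset.range (N + 1),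
          (((N.choose a : ℝ) / ((N + 1).choose a : ℝ)) * q a +
            ((N.choose a : ℝ) / ((N + 1).choose (a + 1) : ℝ)) * q (a + 1)) := by
      refine Finset.sum_congr rfl fun a ha => ?_
      exact hq' a (Nat.lt_succ_iff.mp (Finset.mem_range.mp ha))
    rw [key, Finset.sum_add_distrib]
    rw [Finset.sum_range_succ' (fun a => ((N.choose a : ℝ) / ((N + 1).choose a : ℝ)) * q a)]
    rw [Finset.sum_range_succ (fun a => ((N.choose a : ℝ) / ((N + 1).choose (a + 1) : ℝ)) * q (a + 1))]
    simp only [Nat.choose_zero_right, Nat.choose_self, Nat.cast_one, div_one, one_mul]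
    have hmid : ∀ a ∈ Finset.range N,
        ((N.choose (a + 1) : ℝ) / ((N + 1).choose (a + 1) : ℝ)) * q (a + 1)
          + ((N.choose a : ℝ) / ((N + 1).choose (a + 1) : ℝ)) * q (a + 1) = q (a + 1) := by
      intro a ha
      have haN : a < N := Finset.mem_range.mp ha
      have hne : ((N + 1).choose (a + 1) : ℝ) ≠ 0 := by
        exact_mod_cast (Nat.choose_pos (by omega : a + 1 ≤ N + 1)).ne'
      have hpas : ((N + 1).choose (a + 1) : ℝ) = (N.choose a : ℝ) + (N.choose (a + 1) : ℝ) := by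
        push_cast [Nat.choose_succ_succ N a]
        ring
      field_simp
      rw [hpas]; ring
    have := Finset.sum_add_distrib (s := Finset.range N)
      (f := fun a => ((N.choose (a + 1) : ℝ) / ((N + 1).choose (a + 1) : ℝ)) * q (a + 1))
      (g := fun a => ((N.choose a : ℝ) / ((N + 1).choose (a + 1) : ℝ)) * q (a + 1))
    rw [show (∑ a ∈ Finset.range N, ((N.choose (a + 1) : ℝ) / ((N + 1).choose (a + 1) : ℝ)) * q (a + 1)) + q 0
        + ((∑ a ∈ Finset.range N, ((N.choose a : ℝ) / ((N + 1).choose (a + 1) : ℝ)) * q (a + 1)) + q (N + 1))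
      = q 0 + (∑ a ∈ Finset.range N,
          (((N.choose (a + 1) : ℝ) / ((N + 1).choose (a + 1) : ℝ)) * q (a + 1)
            + ((N.choose a : ℝ) / ((N + 1).choose (a + 1) : ℝ)) * q (a + 1)))
        + q (N + 1) from by rw [Finset.sum_add_distrib]; ring]
    rw [Finset.sum_congr rfl hmid]
    calc q 0 + (∑ a ∈ Finset.range N, q (a + 1)) + q (N + 1)
        = ∑ a ∈ Finset.range (N + 2), q a := by
          rw [Finset.sum_range_succ, Finset.sum_range_succ' q N]; ring
      _ = 1 := hsum
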